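/- arXiv:1401.6757 — 6 statements merged into one kernel-verified Lean document; each statement's English description precedes it below -/
import Mathlib

section
/- Let S be a nonempty compact set of real n×n matrices, let A₁, A₂ be real n×n matrices, and let ε > 0. Then exactly one of the following two statements holds: (1) there exists a matrix X in the convex hull of S such that A₁ • X ≥ ε and A₂ • X ≥ ε; (2) there exists p ∈ [0,1] such that (p·A₁ + (1−p)·A₂) • X < ε for every X ∈ S. -/
open Matrix BigOperators

noncomputable def frob {m : Type*} [Fintype m] (A X : Matrix m m ℝ) : ℝ :=
  (Aᵀ * X).trace

noncomputable def frobL {n : ℕ} (A : Matrix (Fin n) (Fin n) ℝ) :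
    Matrix (Fin n) (Fin n) ℝ →ₗ[ℝ] ℝ where
  toFun X := frob A X
  map_add' X Y := by simp [frob, Matrix.mul_add]
  map_smul' c X := by simp [frob, Matrix.mul_smul]

lemma frob_comb {n : ℕ} (p : ℝ) (A₁ A₂ X : Matrix (Fin n) (Fin n) ℝ) :
    frob (p • A₁ + (1 - p) • A₂) X = p * frob A₁ X + (1 - p) * frob A₂ X := by
  simp [frob, Matrix.transpose_add, Matrix.transpose_smul, Matrix.add_mul,
    Matrix.smul_mul]

/-- Convex hull of a nonempty compact set in a finite-dimensional real normed
space is compact (via Carathéodory). -/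
lemma isCompact_convexHull_of_isCompact' {E : Type*} [AddCommGroup E]
    [Module ℝ E] [TopologicalSpace E] [IsTopologicalAddGroup E]
    [ContinuousSMul ℝ E] [FiniteDimensional ℝ E] {s : Set E} (hne : s.Nonempty)
    (hs : IsCompact s) : IsCompact (convexHull ℝ s) := by
  classical
  obtain ⟨s₀, hs₀⟩ := hne
  set d : ℕ := Module.finrank ℝ E + 1 with hd
  set g : (Fin d → ℝ) × (Fin d → E) → E := fun wz => ∑ i, wz.1 i • wz.2 i with hg
  have hgc : Continuous g := by
    apply continuous_finset_sum
    intro i _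
    exact ((continuous_apply i).comp continuous_fst).smul
      ((continuous_apply i).comp continuous_snd)
  have hK : IsCompact ((stdSimplex ℝ (Fin d)) ×ˢ (Set.univ.pi fun _ : Fin d => s)) :=
    (isCompact_stdSimplex ℝ _).prod (isCompact_univ_pi fun _ => hs)
  have himg : convexHull ℝ s
      = g '' ((stdSimplex ℝ (Fin d)) ×ˢ (Set.univ.pi fun _ : Fin d => s)) := by
    apply Set.Subset.antisymm
    · intro x hx
      rw [convexHull_eq_union] at hx
      simp only [Set.mem_iUnion] at hx
      obtain ⟨t, hts, hti, hxt⟩ := hx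
      have hcard : t.card ≤ d := by
        have h1 := hti.card_le_finrank_succ
        rw [Fintype.card_coe] at h1
        have h2 := Submodule.finrank_le (vectorSpan ℝ (Set.range ((↑) : t → E)))
        omega
      rw [Finset.convexHull_eq] at hxt
      obtain ⟨w, hw0, hw1, hwx⟩ := hxt
      rw [Finset.centerMass_eq_of_sum_1 _ _ hw1] at hwx
      set e : {a // a ∈ t} ≃ Fin t.card := t.equivFin with he
      set W : ℕ → ℝ :=
        fun i => if h : i < t.card then w ((e.symm ⟨i, h⟩ : {a // a ∈ t}) : E) else 0 with hW
      set Z : ℕ → E :=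
        fun i => if h : i < t.card then ((e.symm ⟨i, h⟩ : {a // a ∈ t}) : E) else s₀ with hZ
      set V : ℕ → E :=
        fun i => if h : i < t.card then
          w ((e.symm ⟨i, h⟩ : {a // a ∈ t}) : E) • ((e.symm ⟨i, h⟩ : {a // a ∈ t}) : E)
          else 0 with hV
      have hWsum : ∑ i : Fin d, W (i : ℕ) = 1 := by
        rw [Fin.sum_univ_eq_sum_range W d,
          ← Finset.sum_subset (Finset.range_subset_range.2 hcard)
            (fun i _ hi => by simp only [hW]; rw [dif_neg (by simpa using hi)]),
          ← Fin.sum_univ_eq_sum_range W t.card]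
        have h3 : ∀ i : Fin t.card, W (i : ℕ) = w ((e.symm i : {a // a ∈ t}) : E) :=
          fun i => by simp only [hW]; rw [dif_pos i.isLt]
        rw [Finset.sum_congr rfl (fun i _ => h3 i),
          Equiv.sum_comp e.symm (fun a : {a // a ∈ t} => w (a : E)),
          Finset.sum_coe_sort t w]
        exact hw1
      have hVsum : ∑ i : Fin d, V (i : ℕ) = x := by
        rw [Fin.sum_univ_eq_sum_range V d,
          ← Finset.sum_subset (Finset.range_subset_range.2 hcard)
            (fun i _ hi => by simp only [hV]; rw [dif_neg (by simpa using hi)]),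
          ← Fin.sum_univ_eq_sum_range V t.card]
        have h3 : ∀ i : Fin t.card, V (i : ℕ)
            = w ((e.symm i : {a // a ∈ t}) : E) • ((e.symm i : {a // a ∈ t}) : E) :=
          fun i => by simp only [hV]; rw [dif_pos i.isLt]
        rw [Finset.sum_congr rfl (fun i _ => h3 i),
          Equiv.sum_comp e.symm (fun a : {a // a ∈ t} => w (a : E) • (a : E)),
          Finset.sum_coe_sort t (fun a => w a • a)]
        exact hwx
      refine ⟨(fun i => W (i : ℕ), fun i => Z (i : ℕ)), ⟨⟨?_, hWsum⟩, ?_⟩, ?_⟩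
      · intro i
        simp only [hW]
        split
        · exact hw0 _ (Subtype.mem _)
        · exact le_rfl
      · intro i _
        simp only [hZ]
        split
        · exact hts (Subtype.mem _)
        · exact hs₀
      · show ∑ i : Fin d, W (i : ℕ) • Z (i : ℕ) = x
        rw [← hVsum]
        apply Finset.sum_congr rfl
        intro i _
        by_cases h : (i : ℕ) < t.card
        · simp only [hW, hZ, hV]; rw [dif_pos h, dif_pos h, dif_pos h]
        · simp only [hW, hZ, hV]; rw [dif_neg h, dif_neg h, dif_neg h, zero_smul]
    · rintro x ⟨⟨w, z⟩, ⟨hwmem, hzmem⟩, rfl⟩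
      show ∑ i, w i • z i ∈ convexHull ℝ s
      apply (convex_convexHull ℝ s).sum_mem
      · intro i _; exact hwmem.1 i
      · exact hwmem.2
      · intro i _; exact subset_convexHull ℝ s (hzmem i (Set.mem_univ i))
  rw [himg]
  exact hK.image hgc

/-- duality dichotomy (Lemma 3 of the paper). -/
theorem sdp_duality_dichotomy {n : ℕ} (S : Set (Matrix (Fin n) (Fin n) ℝ))
    (hSne : S.Nonempty) (hScomp : IsCompact S)
    (A₁ A₂ : Matrix (Fin n) (Fin n) ℝ) (ε : ℝ) (hε : 0 < ε) :
    Xor'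
      (∃ X ∈ convexHull ℝ S, ε ≤ frob A₁ X ∧ ε ≤ frob A₂ X)
      (∃ p ∈ Set.Icc (0 : ℝ) 1, ∀ X ∈ S, frob (p • A₁ + (1 - p) • A₂) X < ε) := by
  -- Mutual exclusion
  have hnotboth : ¬ ((∃ X ∈ convexHull ℝ S, ε ≤ frob A₁ X ∧ ε ≤ frob A₂ X) ∧
      (∃ p ∈ Set.Icc (0 : ℝ) 1, ∀ X ∈ S, frob (p • A₁ + (1 - p) • A₂) X < ε)) := by
    rintro ⟨⟨X, hX, h1, h2⟩, p, ⟨hp0, hp1⟩, hp⟩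
    have hconv : convexHull ℝ S ⊆ {Y | frobL (p • A₁ + (1 - p) • A₂) Y < ε} := by
      apply convexHull_min _ (convex_halfSpace_lt (frobL _).isLinear ε)
      intro Y hY; exact hp Y hY
    have hlt : frob (p • A₁ + (1 - p) • A₂) X < ε := hconv hX
    have hge : ε ≤ frob (p • A₁ + (1 - p) • A₂) X := by
      rw [frob_comb]
      have e1 : p * ε ≤ p * frob A₁ X := mul_le_mul_of_nonneg_left h1 hp0
      have e2 : (1 - p) * ε ≤ (1 - p) * frob A₂ X :=
        mul_le_mul_of_nonneg_left h2 (by linarith)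
      nlinarith
    linarith
  by_cases h1 : ∃ X ∈ convexHull ℝ S, ε ≤ frob A₁ X ∧ ε ≤ frob A₂ X
  · exact Or.inl ⟨h1, fun h2 => hnotboth ⟨h1, h2⟩⟩
  · refine Or.inr ⟨?_, h1⟩
    -- separation argument in ℝ × ℝ
    set φ : Matrix (Fin n) (Fin n) ℝ →ₗ[ℝ] ℝ × ℝ := (frobL A₁).prod (frobL A₂) with hφ
    have hφc : Continuous φ := φ.continuous_of_finiteDimensional
    set T : Set (ℝ × ℝ) := φ '' (convexHull ℝ S) with hT
    have hTcomp : IsCompact T :=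
      (isCompact_convexHull_of_isCompact' hSne hScomp).image hφc
    have hTconv : Convex ℝ T := ((convex_convexHull ℝ S).linear_image φ)
    set Q : Set (ℝ × ℝ) := Set.Ici ε ×ˢ Set.Ici ε with hQ
    have hQconv : Convex ℝ Q := (convex_Ici ε).prod (convex_Ici ε)
    have hQclosed : IsClosed Q := isClosed_Ici.prod isClosed_Ici
    have hdisj : Disjoint T Q := by
      rw [Set.disjoint_left]
      rintro ⟨x, y⟩ ⟨X, hX, hXeq⟩ hq
      apply h1
      rw [Prod.mk.injEq] at hXeq
      refine ⟨X, hX, ?_, ?_⟩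
      · have h := hq.1
        rw [← hXeq.1] at h
        exact h
      · have h := hq.2
        rw [← hXeq.2] at h
        exact h
    obtain ⟨f, u, v, hfT, huv, hfQ⟩ :=
      geometric_hahn_banach_compact_closed hTconv hTcomp hQconv hQclosed hdisj
    set a : ℝ := f (1, 0) with ha
    set b : ℝ := f (0, 1) with hb
    have hfxy : ∀ x y : ℝ, f (x, y) = a * x + b * y := by
      intro x y
      have h : (x, y) = x • ((1:ℝ), (0:ℝ)) + y • ((0:ℝ), (1:ℝ)) := by
        simp [Prod.ext_iff]
      rw [h, map_add, f.map_smul, f.map_smul]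
      simp [ha, hb, mul_comm]
    have hcorner : v < a * ε + b * ε := by
      have hmem : ((ε, ε) : ℝ × ℝ) ∈ Q := by constructor <;> simp
      have h := hfQ _ hmem
      rwa [hfxy] at h
    have hanneg : 0 ≤ a := by
      by_contra hneg
      push_neg at hneg
      have hane : a ≠ 0 := ne_of_lt hneg
      set t : ℝ := (a * ε + b * ε - v + 1) / (-a) with ht
      have htpos : 0 < t := by
        apply div_pos; linarith; linarith
      have hmem : ((ε + t, ε) : ℝ × ℝ) ∈ Q := by
        constructor <;> simp
        linarith
      have h := hfQ _ hmem
      rw [hfxy] at h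
      have hta : a * t = -(a * ε + b * ε - v + 1) := by
        rw [ht, ← mul_div_assoc, div_neg, mul_div_cancel_left₀ _ hane]
      nlinarith
    have hbnneg : 0 ≤ b := by
      by_contra hneg
      push_neg at hneg
      have hbne : b ≠ 0 := ne_of_lt hneg
      set t : ℝ := (a * ε + b * ε - v + 1) / (-b) with ht
      have htpos : 0 < t := by
        apply div_pos; linarith; linarith
      have hmem : ((ε, ε + t) : ℝ × ℝ) ∈ Q := by
        constructor <;> simp
        linarith
      have h := hfQ _ hmem
      rw [hfxy] at h
      have hta : b * t = -(a * ε + b * ε - v + 1) := by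
        rw [ht, ← mul_div_assoc, div_neg, mul_div_cancel_left₀ _ hbne]
      nlinarith
    have hspos : 0 < a + b := by
      rcases lt_or_eq_of_le (add_nonneg hanneg hbnneg) with h | h
      · exact h
      · exfalso
        have ha0 : a = 0 := by linarith
        have hb0 : b = 0 := by linarith
        obtain ⟨X0, hX0⟩ := hSne
        have hX0' : X0 ∈ convexHull ℝ S := subset_convexHull ℝ S hX0
        have hf0 := hfT (φ X0) ⟨X0, hX0', rfl⟩
        have hfeq : f (φ X0) = a * (frob A₁ X0) + b * (frob A₂ X0) := hfxy _ _
        rw [hfeq, ha0, hb0] at hf0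
        rw [ha0, hb0] at hcorner
        simp at hf0 hcorner
        linarith
    refine ⟨a / (a + b), ⟨div_nonneg hanneg hspos.le, by
      rw [div_le_one hspos]; linarith⟩, ?_⟩
    intro X hX
    have hX' : X ∈ convexHull ℝ S := subset_convexHull ℝ S hX
    have hft := hfT (φ X) ⟨X, hX', rfl⟩
    have hfeq : f (φ X) = a * (frob A₁ X) + b * (frob A₂ X) := hfxy _ _
    rw [hfeq] at hft
    have key : a * frob A₁ X + b * frob A₂ X < (a + b) * ε := by
      nlinarith
    rw [frob_comb]
    have h1p : 1 - a / (a + b) = b / (a + b) := by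
      field_simp
      ring
    rw [h1p, div_mul_eq_mul_div, div_mul_eq_mul_div, ← add_div,
      div_lt_iff₀ hspos]
    linarith
end

section
/- Let A be a real symmetric n×n matrix, let c ∈ ℝ, and let x₁, x₂ ∈ ℝⁿ satisfy x₁ᵀ A x₁ > c and x₂ᵀ A x₂ < c. Then the quadratic equation (x₁ᵀ A x₁ − c)·t² + (2 x₁ᵀ A x₂)·t + (x₂ᵀ A x₂ − c) = 0 has a real root t, and for any such root, the vectors x̃₁ = (t·x₁ + x₂)/√(t² + 1) and x̃₂ = (x₁ − t·x₂)/√(t² + 1) satisfy x̃₁ x̃₁ᵀ + x̃₂ x̃₂ᵀ = x₁ x₁ᵀ + x₂ x₂ᵀ and x̃₁ᵀ A x̃₁ = c. -/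
open Matrix BigOperators

/-- the Sturm–Zhang rotation step. -/
theorem sturm_zhang_rotation_step {n : ℕ} (A : Matrix (Fin n) (Fin n) ℝ)
    (hA : A.IsSymm) (c : ℝ) (x₁ x₂ : Fin n → ℝ)
    (h₁ : c < x₁ ⬝ᵥ A.mulVec x₁) (h₂ : x₂ ⬝ᵥ A.mulVec x₂ < c) :
    (∃ t : ℝ, (x₁ ⬝ᵥ A.mulVec x₁ - c) * t ^ 2 + (2 * (x₁ ⬝ᵥ A.mulVec x₂)) * t
        + (x₂ ⬝ᵥ A.mulVec x₂ - c) = 0) ∧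
    ∀ t : ℝ, (x₁ ⬝ᵥ A.mulVec x₁ - c) * t ^ 2 + (2 * (x₁ ⬝ᵥ A.mulVec x₂)) * t
        + (x₂ ⬝ᵥ A.mulVec x₂ - c) = 0 →
      vecMulVec ((Real.sqrt (t ^ 2 + 1))⁻¹ • (t • x₁ + x₂))
          ((Real.sqrt (t ^ 2 + 1))⁻¹ • (t • x₁ + x₂)) +
        vecMulVec ((Real.sqrt (t ^ 2 + 1))⁻¹ • (x₁ - t • x₂))
          ((Real.sqrt (t ^ 2 + 1))⁻¹ • (x₁ - t • x₂)) =
        vecMulVec x₁ x₁ + vecMulVec x₂ x₂ ∧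
      ((Real.sqrt (t ^ 2 + 1))⁻¹ • (t • x₁ + x₂)) ⬝ᵥ
          A.mulVec ((Real.sqrt (t ^ 2 + 1))⁻¹ • (t • x₁ + x₂)) = c := by
  set a := x₁ ⬝ᵥ A.mulVec x₁ - c with ha_def
  set b := 2 * (x₁ ⬝ᵥ A.mulVec x₂) with hb_def
  set d := x₂ ⬝ᵥ A.mulVec x₂ - c with hd_def
  have ha : 0 < a := by simp [ha_def]; linarith
  have hd : d < 0 := by simp [hd_def]; linarith
  constructor
  · obtain ⟨t, ht⟩ := exists_quadratic_eq_zero (a := a) (b := b) (c := d) (ne_of_gt ha)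
      ⟨Real.sqrt (discrim a b d),
        (Real.mul_self_sqrt (by unfold discrim; nlinarith : (0:ℝ) ≤ discrim a b d)).symm⟩
    exact ⟨t, by rw [sq]; linarith⟩
  · intro t ht
    have hs : (0:ℝ) < t ^ 2 + 1 := by positivity
    have hsq : Real.sqrt (t ^ 2 + 1) ^ 2 = t ^ 2 + 1 := Real.sq_sqrt hs.le
    have hsne : Real.sqrt (t ^ 2 + 1) ≠ 0 := by positivity
    have hsymm : x₂ ⬝ᵥ A.mulVec x₁ = x₁ ⬝ᵥ A.mulVec x₂ := by
      rw [dotProduct_mulVec, dotProduct_comm, ← mulVec_transpose, hA.eq]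
    constructor
    · ext i j
      simp only [vecMulVec_apply, Matrix.add_apply, Pi.smul_apply, Pi.add_apply,
        Pi.sub_apply, smul_eq_mul]
      field_simp
      rw [hsq]; ring
    · have key : t ^ 2 * (x₁ ⬝ᵥ A.mulVec x₁) + 2 * t * (x₁ ⬝ᵥ A.mulVec x₂)
          + (x₂ ⬝ᵥ A.mulVec x₂) = c * (t ^ 2 + 1) := by
        simp only [ha_def, hb_def, hd_def] at ht; nlinarith [ht]
      simp only [smul_dotProduct, dotProduct_smul, mulVec_smul, mulVec_add,
        add_dotProduct, dotProduct_add, smul_eq_mul]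
      have hinv : (Real.sqrt (t ^ 2 + 1))⁻¹ * ((Real.sqrt (t ^ 2 + 1))⁻¹) = (t^2+1)⁻¹ := by
        rw [← mul_inv]
        congr 1
        nlinarith [hsq]
      rw [hsymm]
      have hss : Real.sqrt (t ^ 2 + 1) * Real.sqrt (t ^ 2 + 1) = t ^ 2 + 1 :=
        Real.mul_self_sqrt hs.le
      field_simp
      linear_combination key - c * hsq
end

section
/- Let A be a real symmetric n×n matrix, let r ≥ 1, and let x₁, …, x_r ∈ ℝⁿ be arbitrary vectors; set X = Σ_{i=1}^r x_i x_iᵀ and a = A • X. Then there exist vectors y₁, …, y_r ∈ ℝⁿ such that Σ_{i=1}^r y_i y_iᵀ = X and y_iᵀ A y_i = a/r for every i = 1, …, r. In particular, if A • X ≥ a₀ then y_iᵀ A y_i ≥ a₀/r for all i. -/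
open Matrix BigOperators

lemma frob_sum {n : ℕ} {ι : Type*} (A : Matrix (Fin n) (Fin n) ℝ) (s : Finset ι)
    (M : ι → Matrix (Fin n) (Fin n) ℝ) :
    frob A (∑ i ∈ s, M i) = ∑ i ∈ s, frob A (M i) := by
  simp [frob, Matrix.mul_sum, Matrix.trace_sum]

lemma frob_vecMulVec {n : ℕ} (A : Matrix (Fin n) (Fin n) ℝ) (v : Fin n → ℝ) :
    frob A (vecMulVec v v) = v ⬝ᵥ A.mulVec v := by
  simp only [frob, Matrix.trace, Matrix.diag, Matrix.mul_apply, vecMulVec_apply,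
    dotProduct, Matrix.mulVec, transpose_apply]
  rw [Finset.sum_comm]
  exact Finset.sum_congr rfl fun i _ => by
    simp [Finset.mul_sum]; exact Finset.sum_congr rfl fun j _ => by ring

lemma frob_add {n : ℕ} (A : Matrix (Fin n) (Fin n) ℝ) (M N : Matrix (Fin n) (Fin n) ℝ) :
    frob A (M + N) = frob A M + frob A N := by
  simp [frob, Matrix.mul_add]

lemma rotation2 {n : ℕ} (A : Matrix (Fin n) (Fin n) ℝ) (u w : Fin n → ℝ) (t : ℝ)
    (hu : u ⬝ᵥ A.mulVec u ≤ t) (hw : t ≤ w ⬝ᵥ A.mulVec w) :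
    ∃ u' w' : Fin n → ℝ,
      u' ⬝ᵥ A.mulVec u' = t ∧
      vecMulVec u' u' + vecMulVec w' w' = vecMulVec u u + vecMulVec w w := by
  set f : ℝ → ℝ := fun θ => (Real.cos θ • u + Real.sin θ • w) ⬝ᵥ
      A.mulVec (Real.cos θ • u + Real.sin θ • w) with hf
  have hcont : Continuous f := by
    simp only [hf, dotProduct, Matrix.mulVec]
    apply continuous_finset_sum
    intro i _
    apply Continuous.mul
    · fun_prop
    · apply continuous_finset_sum
      intro j _
      fun_prop
  have h0 : f 0 = u ⬝ᵥ A.mulVec u := by simp [hf]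
  have h1 : f (Real.pi / 2) = w ⬝ᵥ A.mulVec w := by simp [hf]
  have hmem : t ∈ Set.Icc (f 0) (f (Real.pi / 2)) := by rw [h0, h1]; exact ⟨hu, hw⟩
  obtain ⟨θ, _, hθ⟩ := intermediate_value_Icc (by positivity : (0:ℝ) ≤ Real.pi / 2)
    hcont.continuousOn hmem
  refine ⟨Real.cos θ • u + Real.sin θ • w, (-Real.sin θ) • u + Real.cos θ • w, hθ, ?_⟩
  ext i j
  have h := Real.sin_sq_add_cos_sq θ
  simp only [Matrix.add_apply, vecMulVec_apply, Pi.add_apply, Pi.smul_apply, smul_eq_mul]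
  linear_combination (u i * u j + w i * w j) * h

/-- quadratic-form conservation from outer-product conservation -/
lemma q_conserve {n : ℕ} (A : Matrix (Fin n) (Fin n) ℝ) {u' w' u w : Fin n → ℝ}
    (h : vecMulVec u' u' + vecMulVec w' w' = vecMulVec u u + vecMulVec w w) :
    u' ⬝ᵥ A.mulVec u' + w' ⬝ᵥ A.mulVec w' = u ⬝ᵥ A.mulVec u + w ⬝ᵥ A.mulVec w := by
  have := congrArg (frob A) h
  rwa [frob_add, frob_add, frob_vecMulVec, frob_vecMulVec, frob_vecMulVec,
    frob_vecMulVec] at this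

lemma equalize {n : ℕ} (A : Matrix (Fin n) (Fin n) ℝ) :
    ∀ (r : ℕ) (x : Fin (r + 1) → Fin n → ℝ) (t : ℝ),
      (∑ i, x i ⬝ᵥ A.mulVec (x i)) = (r + 1 : ℝ) * t →
      ∃ y : Fin (r + 1) → Fin n → ℝ,
        (∑ i, vecMulVec (y i) (y i)) = (∑ i, vecMulVec (x i) (x i)) ∧
        ∀ i, y i ⬝ᵥ A.mulVec (y i) = t := by
  intro r
  induction r with
  | zero =>
    intro x t hsum
    refine ⟨x, rfl, fun i => ?_⟩
    have hi : i = 0 := by omega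
    rw [hi]
    simpa using hsum
  | succ r ih =>
    intro x t hsum
    -- find indices below and above the average
    have hcard : ((Finset.univ : Finset (Fin (r + 2))).card : ℝ) = (r + 2 : ℝ) := by
      simp
    have hex_lo : ∃ i, x i ⬝ᵥ A.mulVec (x i) ≤ t := by
      by_contra h
      push_neg at h
      have : ∑ i : Fin (r + 2), t < ∑ i, x i ⬝ᵥ A.mulVec (x i) :=
        Finset.sum_lt_sum_of_nonempty Finset.univ_nonempty fun i _ => h i
      rw [Finset.sum_const, nsmul_eq_mul] at this
      rw [hsum, hcard] at this
      push_cast at this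
      linarith
    have hex_hi : ∃ j, t ≤ x j ⬝ᵥ A.mulVec (x j) := by
      by_contra h
      push_neg at h
      have : ∑ i, x i ⬝ᵥ A.mulVec (x i) < ∑ i : Fin (r + 2), t :=
        Finset.sum_lt_sum_of_nonempty Finset.univ_nonempty fun i _ => h i
      rw [Finset.sum_const, nsmul_eq_mul] at this
      rw [hsum, hcard] at this
      push_cast at this
      linarith
    obtain ⟨i, hi⟩ := hex_lo
    obtain ⟨j, hj⟩ := hex_hi
    obtain ⟨u', w', hu't, houter⟩ := rotation2 A (x i) (x j) t hi hj
    have hqsum := q_conserve A houter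
    by_cases hij : i = j
    · -- then x i already has the average value
      subst hij
      have hxi : x i ⬝ᵥ A.mulVec (x i) = t := le_antisymm hi hj
      have hrest : (∑ k : Fin (r + 1), x (i.succAbove k) ⬝ᵥ A.mulVec (x (i.succAbove k)))
          = (r + 1 : ℝ) * t := by
        have h := Fin.sum_univ_succAbove (fun m => x m ⬝ᵥ A.mulVec (x m)) i
        rw [hsum, hxi] at h
        push_cast at h ⊢
        linarith
      obtain ⟨y', hy'sum, hy'q⟩ := ih (fun k => x (i.succAbove k)) t hrest
      set z : Fin (r + 1 + 1) → Fin n → ℝ := i.insertNth (x i) y' with hz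
      have hzi : z i = x i := by simp [hz]
      have hzk : ∀ k, z (i.succAbove k) = y' k := by
        intro k; simp [hz]
      refine ⟨z, ?_, ?_⟩
      · rw [Fin.sum_univ_succAbove (fun m => vecMulVec (z m) (z m)) i,
          Fin.sum_univ_succAbove (fun m => vecMulVec (x m) (x m)) i]
        simp only [hzi, hzk]
        rw [hy'sum]
      · intro m
        rcases eq_or_ne m i with rfl | hm
        · rw [hzi]; exact hxi
        · obtain ⟨k, rfl⟩ := Fin.exists_succAbove_eq hm
          rw [hzk k]
          exact hy'q k
    · -- genuine rotation between positions i and j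
      set x' : Fin (r + 2) → Fin n → ℝ := Function.update x j w' with hx'
      have hx'i : x' i = x i := Function.update_of_ne hij _ _
      have hx'fun : (fun m => x' m ⬝ᵥ A.mulVec (x' m))
          = Function.update (fun m => x m ⬝ᵥ A.mulVec (x m)) j (w' ⬝ᵥ A.mulVec w') := by
        funext m
        rcases eq_or_ne m j with rfl | hm
        · simp [hx']
        · simp [hx', Function.update_of_ne hm]
      have hx'ofun : (fun m => vecMulVec (x' m) (x' m))
          = Function.update (fun m => vecMulVec (x m) (x m)) j (vecMulVec w' w') := by
        funext m
        rcases eq_or_ne m j with rfl | hm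
        · simp [hx']
        · simp [hx', Function.update_of_ne hm]
      have hsubj : ({j} : Finset (Fin (r + 2))) ⊆ Finset.univ :=
        Finset.singleton_subset_iff.2 (Finset.mem_univ j)
      have hqx' : (∑ m, x' m ⬝ᵥ A.mulVec (x' m))
          = (∑ m, x m ⬝ᵥ A.mulVec (x m)) - x j ⬝ᵥ A.mulVec (x j) + w' ⬝ᵥ A.mulVec w' := by
        rw [hx'fun, Finset.sum_update_of_mem (Finset.mem_univ j),
          Finset.sum_sdiff_eq_sub hsubj, Finset.sum_singleton]
        ring
      have hox' : (∑ m, vecMulVec (x' m) (x' m))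
          = (∑ m, vecMulVec (x m) (x m)) - vecMulVec (x j) (x j) + vecMulVec w' w' := by
        rw [hx'ofun, Finset.sum_update_of_mem (Finset.mem_univ j),
          Finset.sum_sdiff_eq_sub hsubj, Finset.sum_singleton]
        abel
      have hrest : (∑ k : Fin (r + 1), x' (i.succAbove k) ⬝ᵥ A.mulVec (x' (i.succAbove k)))
          = (r + 1 : ℝ) * t := by
        have h := Fin.sum_univ_succAbove (fun m => x' m ⬝ᵥ A.mulVec (x' m)) i
        rw [hqx', hsum, hx'i] at h
        push_cast at h ⊢
        linarith [hqsum, hu't]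
      obtain ⟨y', hy'sum, hy'q⟩ := ih (fun k => x' (i.succAbove k)) t hrest
      set z : Fin (r + 1 + 1) → Fin n → ℝ := i.insertNth u' y' with hz
      have hzi : z i = u' := by simp [hz]
      have hzk : ∀ k, z (i.succAbove k) = y' k := by
        intro k; simp [hz]
      refine ⟨z, ?_, ?_⟩
      · rw [Fin.sum_univ_succAbove (fun m => vecMulVec (z m) (z m)) i]
        simp only [hzi, hzk]
        rw [hy'sum]
        have hrestsum : (∑ k : Fin (r + 1), vecMulVec (x' (i.succAbove k)) (x' (i.succAbove k)))
            = (∑ m, vecMulVec (x' m) (x' m)) - vecMulVec (x' i) (x' i) := by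
          have h := Fin.sum_univ_succAbove (fun m => vecMulVec (x' m) (x' m)) i
          rw [h]; abel
        rw [hrestsum, hox', hx'i]
        have h2 : vecMulVec u' u' = vecMulVec (x i) (x i) + vecMulVec (x j) (x j)
            - vecMulVec w' w' := by rw [← houter]; abel
        rw [h2]
        abel
      · intro m
        rcases eq_or_ne m i with rfl | hm
        · rw [hzi]; exact hu't
        · obtain ⟨k, rfl⟩ := Fin.exists_succAbove_eq hm
          rw [hzk k]
          exact hy'q k

/-- guarantee of the Sturm–Zhang rotation procedure (Lemma 2). -/
theorem sturm_zhang_decomposition {n r : ℕ} (hr : 1 ≤ r)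
    (A : Matrix (Fin n) (Fin n) ℝ) (hA : A.IsSymm)
    (x : Fin r → Fin n → ℝ) :
    ∃ y : Fin r → Fin n → ℝ,
      (∑ i, vecMulVec (y i) (y i)) = (∑ i, vecMulVec (x i) (x i)) ∧
      (∀ i, y i ⬝ᵥ A.mulVec (y i)
          = frob A (∑ i, vecMulVec (x i) (x i)) / (r : ℝ)) ∧
      (∀ a₀ : ℝ, a₀ ≤ frob A (∑ i, vecMulVec (x i) (x i)) →
        ∀ i, a₀ / (r : ℝ) ≤ y i ⬝ᵥ A.mulVec (y i)) := by
  obtain ⟨r', rfl⟩ : ∃ r', r = r' + 1 := ⟨r - 1, by omega⟩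
  have hS : frob A (∑ i, vecMulVec (x i) (x i)) = ∑ i, x i ⬝ᵥ A.mulVec (x i) := by
    rw [frob_sum]
    exact Finset.sum_congr rfl fun i _ => frob_vecMulVec A (x i)
  set S := frob A (∑ i, vecMulVec (x i) (x i)) with hSdef
  have hr1 : ((r' : ℝ) + 1) ≠ 0 := by positivity
  have hsum : (∑ i, x i ⬝ᵥ A.mulVec (x i)) = (r' + 1 : ℝ) * (S / (r' + 1 : ℝ)) := by
    rw [← hS]
    field_simp
  obtain ⟨y, hysum, hyq⟩ := equalize A r' x (S / (r' + 1 : ℝ)) hsum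
  have hcast : ((r' + 1 : ℕ) : ℝ) = (r' : ℝ) + 1 := by push_cast; ring
  refine ⟨y, hysum, fun i => by rw [hyq i, hcast], ?_⟩
  intro a₀ ha i
  rw [hyq i, hcast]
  have hpos : (0 : ℝ) < (r' : ℝ) + 1 := by positivity
  exact div_le_div_of_nonneg_right ha hpos.le
end

section
/- Let A be a real symmetric n×n matrix, b ∈ ℝⁿ, M a real symmetric positive definite n×n matrix, c ∈ ℝ, κ > 0, and δ > 0. Define the (n+1)×(n+1) matrices A₁ = (1/(2κ))·[[−c, bᵀ],[b, A]] and A₂ = (1/(2κ))·[[1, 0],[0, −M]]. Let y ∈ ℝ^{n+1} satisfy ‖y‖ ≤ 1, yᵀ A₁ y ≥ δ, and yᵀ A₂ y ≥ δ. Write y = (α, ỹ) with α ∈ ℝ and ỹ ∈ ℝⁿ. Then α ≠ 0, and the vector x = ỹ/α satisfies xᵀ A x + 2 bᵀ x ≥ c + 2κδ and xᵀ M x ≤ 1 − 2κδ; in particular xᵀ A x + 2 bᵀ x ≥ c and xᵀ M x ≤ 1. -/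
open Matrix BigOperators

noncomputable def euclNorm {m : Type*} [Fintype m] (x : m → ℝ) : ℝ :=
  Real.sqrt (∑ i, x i ^ 2)

/-- The block matrix `A₁ = (1/(2κ))·[[−c, bᵀ],[b, A]]`. -/
noncomputable def A1mat {n : ℕ} (A : Matrix (Fin n) (Fin n) ℝ) (b : Fin n → ℝ)
    (c κ : ℝ) : Matrix (Unit ⊕ Fin n) (Unit ⊕ Fin n) ℝ :=
  (2 * κ)⁻¹ • Matrix.fromBlocks (Matrix.of fun _ _ => -c) (Matrix.of fun _ j => b j)
      (Matrix.of fun i _ => b i) A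

/-- The block matrix `A₂ = (1/(2κ))·[[1, 0],[0, −M]]`. -/
noncomputable def A2mat {n : ℕ} (M : Matrix (Fin n) (Fin n) ℝ)
    (κ : ℝ) : Matrix (Unit ⊕ Fin n) (Unit ⊕ Fin n) ℝ :=
  (2 * κ)⁻¹ • Matrix.fromBlocks (Matrix.of fun _ _ => (1 : ℝ)) 0 0 (-M)

private lemma aux1 (t c a P Q : ℝ) (ht : 0 < t) (ha : 0 < a) (ha1 : a ≤ 1)
    (h : t ≤ -(c*a) + Q + P) : (c + t) * a ≤ P + Q := by nlinarith

private lemma aux2 (t a R : ℝ) (ht : 0 < t) (ha : 0 < a) (ha1 : a ≤ 1)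
    (hR0 : 0 ≤ R) (h : t ≤ a - R) : R ≤ (1 - t) * a := by nlinarith

private lemma aux3 (t a R : ℝ) (ht : 0 < t) (ha : 0 < a)
    (hR0 : 0 ≤ R) (h : t ≤ a - R) : R ≤ 1 * a := by nlinarith

/-- rounding an approximate rank-one SDP solution to a feasible
point of the trust-region feasibility problem. -/
theorem sdp_rounding {n : ℕ} (A : Matrix (Fin n) (Fin n) ℝ) (hA : A.IsSymm)
    (b : Fin n → ℝ) (M : Matrix (Fin n) (Fin n) ℝ) (hM : M.PosDef)
    (c κ δ : ℝ) (hκ : 0 < κ) (hδ : 0 < δ)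
    (y : Unit ⊕ Fin n → ℝ) (hy : euclNorm y ≤ 1)
    (h1 : δ ≤ y ⬝ᵥ (A1mat A b c κ).mulVec y)
    (h2 : δ ≤ y ⬝ᵥ (A2mat M κ).mulVec y) :
    y (Sum.inl ()) ≠ 0 ∧
    (let x : Fin n → ℝ := (y (Sum.inl ()))⁻¹ • fun i => y (Sum.inr i)
     c + 2 * κ * δ ≤ x ⬝ᵥ A.mulVec x + 2 * (b ⬝ᵥ x) ∧
     x ⬝ᵥ M.mulVec x ≤ 1 - 2 * κ * δ ∧
     c ≤ x ⬝ᵥ A.mulVec x + 2 * (b ⬝ᵥ x) ∧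
     x ⬝ᵥ M.mulVec x ≤ 1) := by
  set α := y (Sum.inl ()) with hαdef
  set v : Fin n → ℝ := fun i => y (Sum.inr i) with hvdef
  have hy' : y = Sum.elim (fun _ => α) v := by
    funext z
    cases z with
    | inl u => cases u; rfl
    | inr i => rfl
  have h2κ : (0:ℝ) < 2 * κ := by linarith
  set P := v ⬝ᵥ A.mulVec v with hP
  set Q := b ⬝ᵥ v with hQ
  set R := v ⬝ᵥ M.mulVec v with hR
  have hbv : v ⬝ᵥ b = Q := dotProduct_comm v b
  have hq1 : y ⬝ᵥ (A1mat A b c κ).mulVec y = (2*κ)⁻¹ * (-(c*α^2) + 2*α*Q + P) := by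
    rw [hy', A1mat, Matrix.smul_mulVec, dotProduct_smul, smul_eq_mul,
      Matrix.fromBlocks_mulVec, sumElim_dotProduct_sumElim,
      Sum.elim_comp_inl, Sum.elim_comp_inr]
    have e1 : ((Matrix.of fun (_ : Unit) (_ : Unit) => -c).mulVec fun _ => α)
        = fun _ : Unit => -c * α := by
      funext u; simp [Matrix.mulVec, dotProduct]
    have e2 : ((Matrix.of fun (_ : Unit) j => b j).mulVec v) = fun _ : Unit => Q := by
      funext u; simp [Matrix.mulVec, dotProduct, hQ]
    have e3 : ((Matrix.of fun i (_ : Unit) => b i).mulVec fun _ => α) = α • b := by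
      funext i; simp [Matrix.mulVec, dotProduct, mul_comm]
    rw [e1, e2, e3, dotProduct_add, dotProduct_add, dotProduct_smul, hbv, ← hP]
    simp only [dotProduct, Pi.add_apply, Finset.univ_unique, Finset.sum_singleton,
      smul_eq_mul]
    ring
  have hq2 : y ⬝ᵥ (A2mat M κ).mulVec y = (2*κ)⁻¹ * (α^2 - R) := by
    rw [hy', A2mat, Matrix.smul_mulVec, dotProduct_smul, smul_eq_mul,
      Matrix.fromBlocks_mulVec, sumElim_dotProduct_sumElim,
      Sum.elim_comp_inl, Sum.elim_comp_inr]
    have e1 : ((Matrix.of fun (_ : Unit) (_ : Unit) => (1:ℝ)).mulVec fun _ => α)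
        = fun _ : Unit => α := by
      funext u; simp [Matrix.mulVec, dotProduct]
    rw [e1, Matrix.zero_mulVec, Matrix.zero_mulVec, Matrix.neg_mulVec,
      dotProduct_add, dotProduct_add, dotProduct_neg, ← hR]
    simp only [dotProduct, Pi.add_apply, Pi.zero_apply, Finset.univ_unique,
      Finset.sum_singleton, add_zero, zero_add, mul_zero, Finset.sum_const_zero]
    ring
  rw [hq1] at h1
  rw [hq2] at h2
  have h1' : 2*κ*δ ≤ -(c*α^2) + 2*α*Q + P := by
    rw [le_inv_mul_iff₀ h2κ] at h1; linarith
  have h2' : 2*κ*δ ≤ α^2 - R := by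
    rw [le_inv_mul_iff₀ h2κ] at h2; linarith
  have hR0 : 0 ≤ R := by
    have := hM.posSemidef.dotProduct_mulVec_nonneg v
    simpa [hR] using this
  have hκδ : 0 < 2*κ*δ := by positivity
  have hα2pos : 0 < α^2 := by nlinarith
  have hαne : α ≠ 0 := by
    intro h; rw [h] at hα2pos; simp at hα2pos
  have hsum : α^2 + ∑ i, v i ^ 2 ≤ 1 := by
    have hs : ∑ i, y i ^ 2 = α^2 + ∑ i, v i ^ 2 := by
      rw [Fintype.sum_sum_type]; simp [hαdef, hvdef]
    have h0 : 0 ≤ ∑ i, y i ^ 2 := by positivity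
    have hy2 : Real.sqrt (∑ i, y i ^ 2) ≤ 1 := hy
    have hle : ∑ i, y i ^ 2 ≤ 1 := by
      have := Real.sq_sqrt h0
      nlinarith [Real.sqrt_nonneg (∑ i, y i ^ 2)]
    linarith [hs ▸ hle]
  have hα2le1 : α^2 ≤ 1 := by
    have : 0 ≤ ∑ i, v i ^ 2 := by positivity
    linarith
  have eA : α⁻¹ * (α⁻¹ * P) + 2 * (α⁻¹ * Q) = (P + 2*α*Q) / α^2 := by
    field_simp
  have eM : α⁻¹ * (α⁻¹ * R) = R / α^2 := by
    rw [div_eq_mul_inv, pow_two, mul_inv]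
    ring
  have hxA : (α⁻¹ • v) ⬝ᵥ A.mulVec (α⁻¹ • v) + 2 * (b ⬝ᵥ (α⁻¹ • v))
      = (P + 2*α*Q)/α^2 := by
    simp only [Matrix.mulVec_smul, dotProduct_smul, smul_dotProduct, smul_eq_mul]
    rw [← hP, ← hQ, eA]
  have hxM : (α⁻¹ • v) ⬝ᵥ M.mulVec (α⁻¹ • v) = R/α^2 := by
    simp only [Matrix.mulVec_smul, dotProduct_smul, smul_dotProduct, smul_eq_mul]
    rw [← hR, eM]
  have h1'' : 2*κ*δ ≤ -(c*α^2) + 2*α*Q + P := h1'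
  refine ⟨hαne, ?_, ?_, ?_, ?_⟩
  · rw [hxA, le_div_iff₀ hα2pos]
    have := aux1 (2*κ*δ) c (α^2) P (2*α*Q) hκδ hα2pos hα2le1 h1''
    linarith
  · rw [hxM, div_le_iff₀ hα2pos]
    exact aux2 (2*κ*δ) (α^2) R hκδ hα2pos hα2le1 hR0 h2'
  · rw [hxA, le_div_iff₀ hα2pos]
    have := aux1 (2*κ*δ) c (α^2) P (2*α*Q) hκδ hα2pos hα2le1 h1''
    nlinarith [mul_pos hκδ hα2pos]
  · rw [hxM, div_le_iff₀ hα2pos]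
    have := aux3 (2*κ*δ) (α^2) R hκδ hα2pos hR0 h2'
    linarith
end

section
/- Let A be a real symmetric n×n matrix whose largest eigenvalue λ_max(A) is nonnegative. Then the supremum of A • X over all positive semidefinite n×n matrices X with tr(X) ≤ 1 equals λ_max(A), and it is attained (by X = v vᵀ for a unit-norm eigenvector v corresponding to λ_max(A)). -/
open Matrix BigOperators

noncomputable def lamMax {m : Type*} [Fintype m] [DecidableEq m]
    (A : Matrix m m ℝ) : ℝ :=
  if h : A.IsHermitian then ⨆ i, h.eigenvalues i else 0

/-- linear optimization over the spectrahedron `{X ⪰ 0, tr X ≤ 1}`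
is a maximal eigenvalue computation. -/
theorem lamMax_is_greatest_over_spectrahedron {n : ℕ} (hn : 0 < n)
    (A : Matrix (Fin n) (Fin n) ℝ) (hA : A.IsHermitian) (h0 : 0 ≤ lamMax A) :
    IsGreatest (frob A '' {X : Matrix (Fin n) (Fin n) ℝ | X.PosSemidef ∧ X.trace ≤ 1})
      (lamMax A) := by
  classical
  have hF : Nonempty (Fin n) := ⟨⟨0, hn⟩⟩
  have hAt : Aᵀ = A := by
    ext i j
    have := congrFun (congrFun hA.eq i) j
    simpa [conjTranspose_apply] using this
  have hlam : lamMax A = ⨆ i, hA.eigenvalues i := dif_pos hA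
  have hbdd : BddAbove (Set.range hA.eigenvalues) :=
    Set.Finite.bddAbove (Set.finite_range _)
  constructor
  · -- membership: attained at v vᵀ
    obtain ⟨i0, hi0⟩ := exists_eq_ciSup_of_finite (f := hA.eigenvalues)
    set v : Fin n → ℝ := ⇑(hA.eigenvectorBasis i0) with hv
    have hvv : ∑ i, v i * v i = 1 := by
      have h1 := hA.eigenvectorBasis.orthonormal.1 i0
      have h2 : (inner ℝ (hA.eigenvectorBasis i0) (hA.eigenvectorBasis i0) : ℝ) = 1 := by
        rw [real_inner_self_eq_norm_sq, h1]; norm_num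
      rw [PiLp.inner_apply] at h2
      simpa only [RCLike.inner_apply, conj_trivial, mul_comm] using h2
    refine ⟨vecMulVec v v, ⟨Matrix.PosSemidef.of_dotProduct_mulVec_nonneg ?_ ?_, ?_⟩, ?_⟩
    · ext i j; simp [conjTranspose_apply, vecMulVec_apply, mul_comm]
    · intro x
      have hcalc : star x ⬝ᵥ (vecMulVec v v *ᵥ x) = (v ⬝ᵥ x) * (v ⬝ᵥ x) := by
        simp [dotProduct, mulVec, vecMulVec_apply, Finset.mul_sum, Finset.sum_mul,
          mul_comm, mul_assoc, mul_left_comm]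
      rw [hcalc]
      exact mul_self_nonneg _
    · simp [Matrix.trace, Matrix.diag, vecMulVec_apply, hvv]
    · have hAv : A *ᵥ v = hA.eigenvalues i0 • v := hA.mulVec_eigenvectorBasis i0
      have hmul : A * vecMulVec v v = vecMulVec (A *ᵥ v) v := by
        ext i j
        simp [mul_apply, vecMulVec_apply, mulVec, dotProduct, Finset.sum_mul, mul_assoc]
      rw [frob, hAt, hmul, hAv, hlam, ← hi0]
      simpa [Matrix.trace, Matrix.diag, vecMulVec_apply, smul_eq_mul, Finset.mul_sum,
        mul_assoc] using congrArg (hA.eigenvalues i0 * ·) hvv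
  · -- upper bound
    rintro y ⟨X, ⟨hX, htr⟩, rfl⟩
    set U : Matrix (Fin n) (Fin n) ℝ := (hA.eigenvectorUnitary : Matrix (Fin n) (Fin n) ℝ)
      with hU
    set Y : Matrix (Fin n) (Fin n) ℝ := Uᴴ * X * U with hY
    have hYpsd : Y.PosSemidef := hX.conjTranspose_mul_mul_same U
    have hUU : U * Uᴴ = 1 := (Matrix.mem_unitaryGroup_iff).mp hA.eigenvectorUnitary.2
    have htrY : Y.trace = X.trace := by
      rw [hY, trace_mul_comm, ← mul_assoc, hUU, one_mul]
    have hspec : A = U * diagonal (hA.eigenvalues) * Uᴴ := by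
      have := hA.spectral_theorem
      simpa [Function.comp, Matrix.star_eq_conjTranspose] using this
    have hdiagY : ∀ i, 0 ≤ Y i i := fun i => by
      have := hYpsd.dotProduct_mulVec_nonneg (Pi.single i 1)
      simpa [dotProduct, mulVec, Pi.single_apply] using this
    have key2 : ∀ d : Fin n → ℝ,
        (U * diagonal d * Uᴴ * X).trace = ∑ i, d i * Y i i := by
      intro d
      calc (U * diagonal d * Uᴴ * X).trace
          = (U * (diagonal d * (Uᴴ * X))).trace := by rw [mul_assoc, mul_assoc]
        _ = ((diagonal d * (Uᴴ * X)) * U).trace := trace_mul_comm _ _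
        _ = (diagonal d * Y).trace := by rw [mul_assoc, ← hY]
        _ = ∑ i, d i * Y i i := by
            simp [Matrix.trace, Matrix.diag, Matrix.mul_apply, Matrix.diagonal_apply,
              Finset.sum_ite_eq]
    have key : frob A X = ∑ i, hA.eigenvalues i * Y i i := by
      rw [frob, hAt]
      conv_lhs => rw [hspec]
      exact key2 _
    have hle : ∀ i, hA.eigenvalues i ≤ lamMax A := fun i => by
      rw [hlam]; exact le_ciSup hbdd i
    calc frob A X = ∑ i, hA.eigenvalues i * Y i i := key
      _ ≤ ∑ i, lamMax A * Y i i := by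
          exact Finset.sum_le_sum fun i _ => mul_le_mul_of_nonneg_right (hle i) (hdiagY i)
      _ = lamMax A * Y.trace := by
          rw [Matrix.trace]; simp [Matrix.diag, Finset.mul_sum]
      _ ≤ lamMax A * 1 := by
          exact mul_le_mul_of_nonneg_left (by rw [htrY]; exact htr) h0
      _ = lamMax A := mul_one _
end

section
/- Let A₁, A₂ be real symmetric n×n matrices with spectral norms ‖A₁‖₂ ≤ 1 and ‖A₂‖₂ ≤ 1, let ε > 0, and for p ∈ [0,1] write A(p) = p·A₁ + (1−p)·A₂. Let x₁, x₂ ∈ ℝⁿ be unit vectors and let 0 ≤ p₁ ≤ p₂ ≤ 1 satisfy p₂ − p₁ ≤ ε/8, x₁ᵀ A(p₁) x₁ ≥ 3ε/4, x₂ᵀ A(p₂) x₂ ≥ 3ε/4, x₁ᵀ A₁ x₁ ≤ x₁ᵀ A₂ x₁, and x₂ᵀ A₂ x₂ ≤ x₂ᵀ A₁ x₂. Then there does not exist p ∈ [0,1] such that both x₁ᵀ A(p) x₁ < ε/2 and x₂ᵀ A(p) x₂ < ε/2. -/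
open Matrix BigOperators

noncomputable def specNorm {m : Type*} [Fintype m] [DecidableEq m]
    (A : Matrix m m ℝ) : ℝ :=
  ‖Matrix.toEuclideanCLM (𝕜 := ℝ) A‖

lemma quad_bound {n : ℕ} (A : Matrix (Fin n) (Fin n) ℝ) (x : Fin n → ℝ) :
    |x ⬝ᵥ A.mulVec x| ≤ specNorm A * euclNorm x ^ 2 := by
  set y : EuclideanSpace ℝ (Fin n) := (WithLp.equiv 2 _).symm x
  have hnorm : ‖y‖ = euclNorm x := by
    rw [EuclideanSpace.norm_eq, euclNorm]
    congr 1
    exact Finset.sum_congr rfl fun i _ => by simp [y, sq_abs]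
  have hdot : x ⬝ᵥ A.mulVec x = inner ℝ y (Matrix.toEuclideanCLM (𝕜 := ℝ) A y) := by
    rw [Matrix.inner_toEuclideanCLM]
    simp [inner, dotProduct, y, mul_comm]
  rw [hdot]
  calc |inner ℝ y (Matrix.toEuclideanCLM (𝕜 := ℝ) A y)|
      ≤ ‖y‖ * ‖Matrix.toEuclideanCLM (𝕜 := ℝ) A y‖ := abs_real_inner_le_norm _ _
    _ ≤ ‖y‖ * (specNorm A * ‖y‖) := by
        gcongr; exact (Matrix.toEuclideanCLM (𝕜 := ℝ) A).le_opNorm y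
    _ = specNorm A * euclNorm x ^ 2 := by rw [hnorm]; ring

lemma expand {n : ℕ} (A₁ A₂ : Matrix (Fin n) (Fin n) ℝ) (x : Fin n → ℝ) (p : ℝ) :
    x ⬝ᵥ (p • A₁ + (1 - p) • A₂).mulVec x =
      p * (x ⬝ᵥ A₁.mulVec x) + (1 - p) * (x ⬝ᵥ A₂.mulVec x) := by
  simp [Matrix.add_mulVec, Matrix.smul_mulVec, dotProduct_add, dotProduct_smul,
    smul_eq_mul]

/-- the two witnesses at the final bracketing values of the binary
search jointly certify dual infeasibility. -/
theorem binary_search_witnesses_certify {n : ℕ}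
    (A₁ A₂ : Matrix (Fin n) (Fin n) ℝ) (hA₁s : A₁.IsSymm) (hA₂s : A₂.IsSymm)
    (hA₁ : specNorm A₁ ≤ 1) (hA₂ : specNorm A₂ ≤ 1)
    (ε : ℝ) (hε : 0 < ε)
    (x₁ x₂ : Fin n → ℝ) (hx₁ : euclNorm x₁ = 1) (hx₂ : euclNorm x₂ = 1)
    (p₁ p₂ : ℝ) (hp₁ : 0 ≤ p₁) (hp₁₂ : p₁ ≤ p₂) (hp₂ : p₂ ≤ 1)
    (hgap : p₂ - p₁ ≤ ε / 8)
    (h₁ : 3 * ε / 4 ≤ x₁ ⬝ᵥ (p₁ • A₁ + (1 - p₁) • A₂).mulVec x₁)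
    (h₂ : 3 * ε / 4 ≤ x₂ ⬝ᵥ (p₂ • A₁ + (1 - p₂) • A₂).mulVec x₂)
    (hm₁ : x₁ ⬝ᵥ A₁.mulVec x₁ ≤ x₁ ⬝ᵥ A₂.mulVec x₁)
    (hm₂ : x₂ ⬝ᵥ A₂.mulVec x₂ ≤ x₂ ⬝ᵥ A₁.mulVec x₂) :
    ¬ ∃ p ∈ Set.Icc (0 : ℝ) 1,
        x₁ ⬝ᵥ (p • A₁ + (1 - p) • A₂).mulVec x₁ < ε / 2 ∧
        x₂ ⬝ᵥ (p • A₁ + (1 - p) • A₂).mulVec x₂ < ε / 2 := by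
  rintro ⟨p, ⟨hp0, hp1⟩, hc₁, hc₂⟩
  have ha₁ : |x₁ ⬝ᵥ A₁.mulVec x₁| ≤ 1 := by
    have := quad_bound A₁ x₁; rw [hx₁] at this; nlinarith
  have hb₁ : |x₁ ⬝ᵥ A₂.mulVec x₁| ≤ 1 := by
    have := quad_bound A₂ x₁; rw [hx₁] at this; nlinarith
  have ha₂ : |x₂ ⬝ᵥ A₁.mulVec x₂| ≤ 1 := by
    have := quad_bound A₁ x₂; rw [hx₂] at this; nlinarith
  have hb₂ : |x₂ ⬝ᵥ A₂.mulVec x₂| ≤ 1 := by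
    have := quad_bound A₂ x₂; rw [hx₂] at this; nlinarith
  rw [expand] at h₁ h₂ hc₁ hc₂
  rw [abs_le] at ha₁ hb₁ ha₂ hb₂
  set a₁ := x₁ ⬝ᵥ A₁.mulVec x₁
  set b₁ := x₁ ⬝ᵥ A₂.mulVec x₁
  set a₂ := x₂ ⬝ᵥ A₁.mulVec x₂
  set b₂ := x₂ ⬝ᵥ A₂.mulVec x₂
  rcases le_total p p₁ with h | h
  · nlinarith [mul_nonneg (sub_nonneg.2 h) (sub_nonneg.2 hm₁)]
  rcases le_total p₂ p with h' | h'
  · nlinarith [mul_nonneg (sub_nonneg.2 h') (sub_nonneg.2 hm₂)]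
  · nlinarith [mul_le_mul_of_nonneg_right ((sub_le_sub_right h' p₁).trans hgap) (sub_nonneg.2 hm₁), mul_nonneg (sub_nonneg.2 h) (sub_nonneg.2 hm₁)]
end
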